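/- arXiv:1304.7366 — 3 statements merged into one kernel-verified Lean document; each statement's English description precedes it below -/
import Mathlib

section
/- Let n ≥ 2, 1 ≤ s ≤ n/2, and α > 0. Then ∫₀¹ ω^{n-s}(1-ω)^s · αn ω^{αn-1} dω ≥ (α/(1+α)) · (s/n)^{2s} · (1 - s/n)^{αn}. -/
open Real MeasureTheory

lemma log_key (b : ℝ) (hb : 0 < b) (hb2 : b ≤ 1/2) :
    b * Real.log b ≤ (1 - b) * Real.log (1 - b) := by
  have h1b : 0 < 1 - b := by linarith
  have h1 : Real.log (b / (1 - b)) ≤ b / (1 - b) - 1 :=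
    Real.log_le_sub_one_of_pos (by positivity)
  have h2 : Real.log ((1 - b)⁻¹) ≤ (1 - b)⁻¹ - 1 :=
    Real.log_le_sub_one_of_pos (by positivity)
  rw [Real.log_div (ne_of_gt hb) (ne_of_gt h1b)] at h1
  rw [Real.log_inv] at h2
  have e1 : b / (1 - b) - 1 = (2*b - 1) / (1 - b) := by field_simp; ring
  have e2 : (1 - b)⁻¹ - 1 = b / (1 - b) := by field_simp; ring
  rw [e1] at h1; rw [e2] at h2
  have h1' := (le_div_iff₀ h1b).mp h1
  have h2' := (le_div_iff₀ h1b).mp h2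
  nlinarith [mul_le_mul_of_nonneg_left h1' hb.le,
    mul_le_mul_of_nonneg_left h2' (by linarith : (0:ℝ) ≤ 1 - 2*b), h1b]

lemma rpow_key (b : ℝ) (hb : 0 < b) (hb2 : b ≤ 1/2) :
    b ^ b ≤ (1 - b) ^ (1 - b) := by
  have h1b : 0 < 1 - b := by linarith
  rw [Real.rpow_def_of_pos hb, Real.rpow_def_of_pos h1b]
  rw [mul_comm (Real.log b), mul_comm (Real.log (1 - b))]
  exact Real.exp_le_exp.2 (log_key b hb hb2)

theorem beta_prior_integral_lower_bound (n s : ℕ) (α : ℝ) (hn : 2 ≤ n) (hs1 : 1 ≤ s)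
    (hsn : (s:ℝ) ≤ n / 2) (hα : 0 < α) :
    ∫ ω in Set.Ioo (0:ℝ) 1, ω ^ (n - s) * (1 - ω) ^ s * (α * n * ω ^ (α * n - 1))
      ≥ (α / (1 + α)) * ((s:ℝ)/n) ^ (2 * s) * (1 - (s:ℝ)/n) ^ (α * n) := by
  have hn0 : (0:ℝ) < n := by positivity
  have hs0 : (0:ℝ) < s := by exact_mod_cast hs1
  set b : ℝ := (s:ℝ)/n with hbdef
  have hb0 : 0 < b := by positivity
  have hb2 : b ≤ 1/2 := by rw [hbdef, div_le_div_iff₀ hn0 (by norm_num)]; linarith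
  have h1b : 0 < 1 - b := by linarith
  have hbn : b * n = s := by rw [hbdef]; field_simp
  have hsn' : (s:ℝ) ≤ (n:ℝ) - s := by linarith
  have hns1 : (1:ℝ) ≤ (n:ℝ) - s := by
    have : (1:ℝ) ≤ (s:ℝ) := by exact_mod_cast hs1
    linarith
  have hsnn : s ≤ n := by
    have : (s:ℝ) ≤ (n:ℝ) := by linarith
    exact_mod_cast this
  have hcast : ((n - s : ℕ) : ℝ) = (n:ℝ) - s := by
    push_cast [Nat.cast_sub hsnn]; ring
  set p : ℝ := (n:ℝ) - s + α * n - 1 with hpdef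
  have hp : 0 < p := by nlinarith
  have hp1 : p + 1 = (n:ℝ) - s + α * n := by ring
  have hp1pos : 0 < p + 1 := by linarith
  -- continuous version of integrand pieces
  have hcont : Continuous fun ω : ℝ => ω ^ p :=
    continuous_iff_continuousAt.2 fun x => Real.continuousAt_rpow_const x p (Or.inr hp.le)
  have hgcont : Continuous fun ω : ℝ => α * n * ((1 - ω) ^ s * ω ^ p) := by
    exact continuous_const.mul (((continuous_const.sub continuous_id).pow s).mul hcont)
  -- rewrite integral with rpow
  have hIeq : ∫ ω in Set.Ioo (0:ℝ) 1, ω ^ (n - s) * (1 - ω) ^ s * (α * n * ω ^ (α * n - 1))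
      = ∫ ω in Set.Ioo (0:ℝ) 1, α * n * ((1 - ω) ^ s * ω ^ p) := by
    refine setIntegral_congr_fun measurableSet_Ioo fun ω hω => ?_
    have hω0 : 0 < ω := hω.1
    have : (ω:ℝ) ^ (n - s) * ω ^ (α * n - 1) = ω ^ p := by
      rw [← Real.rpow_natCast ω (n - s), ← Real.rpow_add hω0, hcast, hpdef]
      ring_nf
    calc ω ^ (n - s) * (1 - ω) ^ s * (α * n * ω ^ (α * n - 1))
        = α * n * ((1 - ω) ^ s * (ω ^ (n - s) * ω ^ (α * n - 1))) := by ring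
      _ = α * n * ((1 - ω) ^ s * ω ^ p) := by rw [this]
  rw [hIeq]
  -- integrability
  have hInt1 : IntegrableOn (fun ω : ℝ => α * n * ((1 - ω) ^ s * ω ^ p))
      (Set.Ioo (0:ℝ) 1) volume :=
    (hgcont.integrableOn_Icc (a := 0) (b := 1)).mono_set Set.Ioo_subset_Icc_self
  have hInt2 : IntegrableOn (fun ω : ℝ => α * n * ((1 - ω) ^ s * ω ^ p))
      (Set.Ioo (0:ℝ) (1 - b)) volume :=
    hInt1.mono_set (Set.Ioo_subset_Ioo le_rfl (by linarith))
  have hInt3 : IntegrableOn (fun ω : ℝ => α * n * (b ^ s * ω ^ p))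
      (Set.Ioo (0:ℝ) (1 - b)) volume := by
    have : Continuous fun ω : ℝ => α * n * (b ^ s * ω ^ p) :=
      continuous_const.mul (continuous_const.mul hcont)
    exact (this.integrableOn_Icc (a := 0) (b := 1 - b)).mono_set Set.Ioo_subset_Icc_self
  -- restrict to subinterval
  have step1 : ∫ ω in Set.Ioo (0:ℝ) (1 - b), α * n * ((1 - ω) ^ s * ω ^ p)
      ≤ ∫ ω in Set.Ioo (0:ℝ) 1, α * n * ((1 - ω) ^ s * ω ^ p) := by
    refine setIntegral_mono_set hInt1 ?_ ?_
    · filter_upwards [ae_restrict_mem measurableSet_Ioo] with ω hω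
      have hω0 : 0 < ω := hω.1
      have hω1 : ω < 1 := hω.2
      have h1 : (0:ℝ) ≤ ω ^ p := Real.rpow_nonneg hω0.le p
      have h2 : (0:ℝ) ≤ 1 - ω := by linarith
      exact mul_nonneg (by positivity) (mul_nonneg (pow_nonneg h2 s) h1)
    · exact HasSubset.Subset.eventuallyLE (Set.Ioo_subset_Ioo le_rfl (by linarith))
  -- pointwise lower bound on subinterval
  have step2 : ∫ ω in Set.Ioo (0:ℝ) (1 - b), α * n * (b ^ s * ω ^ p)
      ≤ ∫ ω in Set.Ioo (0:ℝ) (1 - b), α * n * ((1 - ω) ^ s * ω ^ p) := by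
    refine setIntegral_mono_on hInt3 hInt2 measurableSet_Ioo fun ω hω => ?_
    have hω0 : 0 < ω := hω.1
    have hωb : b ≤ 1 - ω := by have := hω.2; linarith
    have hpow : b ^ s ≤ (1 - ω) ^ s := pow_le_pow_left₀ hb0.le hωb s
    have hωp : (0:ℝ) ≤ ω ^ p := Real.rpow_nonneg hω0.le p
    have hαn : (0:ℝ) ≤ α * n := by positivity
    exact mul_le_mul_of_nonneg_left (mul_le_mul_of_nonneg_right hpow hωp) hαn
  -- compute the integral
  have hJ : ∫ ω in Set.Ioo (0:ℝ) (1 - b), (ω ^ p : ℝ)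
      = (1 - b) ^ (p + 1) / (p + 1) := by
    rw [← integral_Ioc_eq_integral_Ioo,
      ← intervalIntegral.integral_of_le h1b.le,
      integral_rpow (Or.inl (by linarith : (-1:ℝ) < p)),
      Real.zero_rpow (by linarith : p + 1 ≠ 0)]
    ring
  have hval : ∫ ω in Set.Ioo (0:ℝ) (1 - b), α * n * (b ^ s * ω ^ p)
      = α * n * b ^ s * ((1 - b) ^ (p + 1) / (p + 1)) := by
    rw [integral_const_mul, integral_const_mul, hJ]; ring
  -- final inequality chain
  have hfrac : α / (1 + α) ≤ α * n / (p + 1) := by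
    rw [div_le_div_iff₀ (by linarith) hp1pos]
    nlinarith
  have hkey : b ^ (s:ℝ) ≤ (1 - b) ^ ((n:ℝ) - s) := by
    have h := rpow_key b hb0 hb2
    have h2 := Real.rpow_le_rpow (Real.rpow_nonneg hb0.le b) h (le_of_lt hn0)
    rw [← Real.rpow_mul hb0.le, ← Real.rpow_mul h1b.le] at h2
    rwa [hbn, (by rw [sub_mul, one_mul, hbn] : (1 - b) * (n:ℝ) = (n:ℝ) - s)] at h2
  have hkey' : b ^ s ≤ (1 - b) ^ ((n:ℝ) - s) := by
    rwa [← Real.rpow_natCast b s]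
  have hsplit : (1 - b) ^ (p + 1) = (1 - b) ^ ((n:ℝ) - s) * (1 - b) ^ (α * n) := by
    rw [hp1, Real.rpow_add h1b]
  have hfinal : (α / (1 + α)) * b ^ (2 * s) * (1 - b) ^ (α * n)
      ≤ α * n * b ^ s * ((1 - b) ^ (p + 1) / (p + 1)) := by
    rw [hsplit]
    have hbs : (0:ℝ) ≤ b ^ s := by positivity
    have hαb : (0:ℝ) ≤ (1 - b) ^ (α * n) := Real.rpow_nonneg h1b.le _
    have h2s : b ^ (2 * s) = b ^ s * b ^ s := by rw [two_mul, pow_add]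
    calc (α / (1 + α)) * b ^ (2 * s) * (1 - b) ^ (α * n)
        = (α / (1 + α)) * (b ^ s * (b ^ s * (1 - b) ^ (α * n))) := by rw [h2s]; ring
      _ ≤ (α * n / (p + 1)) * (b ^ s * ((1 - b) ^ ((n:ℝ) - s) * (1 - b) ^ (α * n))) := by
          refine mul_le_mul hfrac ?_ (by positivity) (by positivity)
          exact mul_le_mul_of_nonneg_left (mul_le_mul_of_nonneg_right hkey' hαb) hbs
      _ = α * n * b ^ s * ((1 - b) ^ ((n:ℝ) - s) * (1 - b) ^ (α * n) / (p + 1)) := by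
          ring
  calc (α / (1 + α)) * b ^ (2 * s) * (1 - b) ^ (α * n)
      ≤ α * n * b ^ s * ((1 - b) ^ (p + 1) / (p + 1)) := hfinal
    _ = ∫ ω in Set.Ioo (0:ℝ) (1 - b), α * n * (b ^ s * ω ^ p) := hval.symm
    _ ≤ ∫ ω in Set.Ioo (0:ℝ) (1 - b), α * n * ((1 - ω) ^ s * ω ^ p) := step2
    _ ≤ ∫ ω in Set.Ioo (0:ℝ) 1, α * n * ((1 - ω) ^ s * ω ^ p) := step1
end

section
/- Fix β > 1, σ² > 0, and κ ∈ (0,1) with κβ/(β-1) < 1. For any reals θ, θ*, Hölder's inequality with exponents β/(β-1) and β gives: ∫ (p_θ(x)/p_{θ*}(x))^κ · σ^{-1} p_{θ/σ}(x/σ) · p_{θ*}(x) dx ≤ exp(-(κ/2)·((β(1-κ)-1)/(β-1))·(θ-θ*)²) · (2πσ²)^{-1/2} · (σ/(σ²+β)^{1/2} · exp(-(β/(2(σ²+β)))(θ-θ*)²))^{1/β}, where p_μ(x) = (2π)^{-1/2} e^{-(x-μ)²/2}. -/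
open Real MeasureTheory

theorem holder_continuous_part_bound (β σ2 κ : ℝ) (hβ : 1 < β) (hσ : 0 < σ2)
    (hκ0 : 0 < κ) (hκ1 : κ < 1) (hfeas : κ * β / (β - 1) < 1) (θ θs : ℝ) :
    ∫ x : ℝ,
      (((Real.sqrt (2 * Real.pi))⁻¹ * Real.exp (-(x - θ)^2 / 2)) /
        ((Real.sqrt (2 * Real.pi))⁻¹ * Real.exp (-(x - θs)^2 / 2))) ^ κ *
      ((Real.sqrt (2 * Real.pi * σ2))⁻¹ * Real.exp (-(x - θ)^2 / (2 * σ2))) *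
      ((Real.sqrt (2 * Real.pi))⁻¹ * Real.exp (-(x - θs)^2 / 2))
    ≤ Real.exp (-(κ/2) * ((β * (1 - κ) - 1) / (β - 1)) * (θ - θs)^2) *
      (Real.sqrt (2 * Real.pi * σ2))⁻¹ *
      (Real.sqrt σ2 / Real.sqrt (σ2 + β) * Real.exp (-(β / (2 * (σ2 + β))) * (θ - θs)^2)) ^ (1/β) := by
  have hπ : (0:ℝ) < Real.pi := Real.pi_pos
  have hG : (0:ℝ) < Real.sqrt (2 * Real.pi) := Real.sqrt_pos.mpr (by positivity)
  have hS : (0:ℝ) < Real.sqrt (2 * Real.pi * σ2) := Real.sqrt_pos.mpr (by positivity)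
  have hs1 : (0:ℝ) < σ2 + 1 := by linarith
  have hsb : (0:ℝ) < σ2 + β := by linarith
  have hβ0 : (0:ℝ) < β := by linarith
  set a : ℝ := (σ2 + 1) / σ2 with ha_def
  have ha : (0:ℝ) < a := by positivity
  set m : ℝ := θs + ((κ + 1/σ2) * (θ - θs)) / a with hm_def
  set E0 : ℝ := ((κ + 1/σ2) * (θ - θs))^2 / (2 * a) - κ * (θ - θs)^2 / 2
      - (θ - θs)^2 / (2 * σ2) with hE0_def
  -- pointwise identity
  have hpt : ∀ x : ℝ,
      (((Real.sqrt (2 * Real.pi))⁻¹ * Real.exp (-(x - θ)^2 / 2)) /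
        ((Real.sqrt (2 * Real.pi))⁻¹ * Real.exp (-(x - θs)^2 / 2))) ^ κ *
      ((Real.sqrt (2 * Real.pi * σ2))⁻¹ * Real.exp (-(x - θ)^2 / (2 * σ2))) *
      ((Real.sqrt (2 * Real.pi))⁻¹ * Real.exp (-(x - θs)^2 / 2))
      = (Real.sqrt (2 * Real.pi * σ2))⁻¹ * (Real.sqrt (2 * Real.pi))⁻¹ * Real.exp E0
        * Real.exp (-(a/2) * (x - m)^2) := by
    intro x
    rw [mul_div_mul_left _ _ (inv_ne_zero hG.ne'), ← Real.exp_sub, ← Real.exp_mul]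
    rw [show ∀ p q r : ℝ, Real.exp p * ((Real.sqrt (2 * Real.pi * σ2))⁻¹ * Real.exp q) *
          ((Real.sqrt (2 * Real.pi))⁻¹ * Real.exp r)
        = (Real.sqrt (2 * Real.pi * σ2))⁻¹ * (Real.sqrt (2 * Real.pi))⁻¹ * Real.exp (p + q + r)
      from fun p q r => by rw [Real.exp_add, Real.exp_add]; ring]
    conv_rhs => rw [mul_assoc, ← Real.exp_add]
    congr 1
    rw [Real.exp_eq_exp]
    rw [hE0_def, hm_def, ha_def]
    field_simp
    ring
  -- compute the integral
  have hint : (∫ x : ℝ,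
      (((Real.sqrt (2 * Real.pi))⁻¹ * Real.exp (-(x - θ)^2 / 2)) /
        ((Real.sqrt (2 * Real.pi))⁻¹ * Real.exp (-(x - θs)^2 / 2))) ^ κ *
      ((Real.sqrt (2 * Real.pi * σ2))⁻¹ * Real.exp (-(x - θ)^2 / (2 * σ2))) *
      ((Real.sqrt (2 * Real.pi))⁻¹ * Real.exp (-(x - θs)^2 / 2)))
      = (Real.sqrt (2 * Real.pi * σ2))⁻¹ * (Real.sqrt (2 * Real.pi))⁻¹ * Real.exp E0
        * Real.sqrt (Real.pi / (a/2)) := by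
    calc (∫ x : ℝ, _) = ∫ x : ℝ, (Real.sqrt (2 * Real.pi * σ2))⁻¹ * (Real.sqrt (2 * Real.pi))⁻¹
            * Real.exp E0 * Real.exp (-(a/2) * (x - m)^2) := by
          congr 1; ext x; exact hpt x
      _ = (Real.sqrt (2 * Real.pi * σ2))⁻¹ * (Real.sqrt (2 * Real.pi))⁻¹ * Real.exp E0
            * ∫ x : ℝ, Real.exp (-(a/2) * (x - m)^2) := integral_const_mul _ _
      _ = _ := by
          rw [integral_sub_right_eq_self (fun y => Real.exp (-(a/2) * y^2)) m,
            integral_gaussian (a/2)]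
  rw [hint]
  -- simplify the constant
  have hc1 : (Real.sqrt (2 * Real.pi))⁻¹ * Real.sqrt (Real.pi / (a/2))
      = Real.sqrt (σ2 / (σ2 + 1)) := by
    rw [inv_mul_eq_div, ← Real.sqrt_div (by positivity) (2 * Real.pi)]
    congr 1
    rw [ha_def]
    field_simp
  have hE0' : E0 = -((1-κ) * (1+κ*σ2) / (2*(σ2+1))) * (θ - θs)^2 := by
    rw [hE0_def, ha_def]
    field_simp
    ring
  -- RHS manipulation
  have hrpow : (Real.sqrt σ2 / Real.sqrt (σ2 + β)
        * Real.exp (-(β / (2 * (σ2 + β))) * (θ - θs)^2)) ^ (1/β)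
      = (Real.sqrt σ2 / Real.sqrt (σ2 + β)) ^ (1/β)
        * Real.exp ((-(β / (2 * (σ2 + β))) * (θ - θs)^2) * (1/β)) := by
    rw [Real.mul_rpow (by positivity) (Real.exp_pos _).le, ← Real.exp_mul]
  -- the two key inequalities
  have h1 : Real.sqrt (σ2 / (σ2 + 1)) ≤ (Real.sqrt σ2 / Real.sqrt (σ2 + β)) ^ (1/β) := by
    have hbern : ((σ2+β)/σ2) ≤ ((σ2+1)/σ2) ^ β := by
      have hds : (0:ℝ) < 1/σ2 := by positivity
      have h := one_add_mul_self_le_rpow_one_add (s := 1/σ2) (by linarith) hβ.le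
      have e1 : (1:ℝ) + 1/σ2 = (σ2+1)/σ2 := by field_simp
      have e2 : (1:ℝ) + β * (1/σ2) = (σ2+β)/σ2 := by field_simp
      rwa [e1, e2] at h
    have hkey : (σ2/(σ2+1)) ^ β ≤ σ2/(σ2+β) := by
      have e1 : (σ2/(σ2+1)) = ((σ2+1)/σ2)⁻¹ := by field_simp
      have e2 : (σ2/(σ2+β)) = ((σ2+β)/σ2)⁻¹ := by field_simp
      rw [e1, e2, Real.inv_rpow (by positivity)]
      exact inv_anti₀ (by positivity) hbern
    calc Real.sqrt (σ2/(σ2+1)) = ((σ2/(σ2+1)) ^ β) ^ (1/(2*β)) := by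
          rw [Real.sqrt_eq_rpow, ← Real.rpow_mul (by positivity)]
          congr 1
          field_simp
      _ ≤ (σ2/(σ2+β)) ^ (1/(2*β)) := Real.rpow_le_rpow (by positivity) hkey (by positivity)
      _ = (Real.sqrt σ2 / Real.sqrt (σ2+β)) ^ (1/β) := by
          rw [← Real.sqrt_div hσ.le, Real.sqrt_eq_rpow, ← Real.rpow_mul (by positivity)]
          congr 1
          field_simp
  have h2 : -((1-κ) * (1+κ*σ2) / (2*(σ2+1))) * (θ - θs)^2
      ≤ -(κ/2) * ((β * (1 - κ) - 1) / (β - 1)) * (θ - θs)^2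
        + (-(β / (2 * (σ2 + β))) * (θ - θs)^2) * (1/β) := by
    have hb1 : (0:ℝ) < β - 1 := by linarith
    have hcoef : κ/2*((β*(1-κ)-1)/(β-1)) + (β/(2*(σ2+β)))*(1/β)
        ≤ (1-κ)*(1+κ*σ2)/(2*(σ2+1)) := by
      rw [← sub_nonneg]
      have e : (1-κ)*(1+κ*σ2)/(2*(σ2+1)) - (κ/2*((β*(1-κ)-1)/(β-1)) + (β/(2*(σ2+β)))*(1/β))
          = (1 + κ*σ2 - β*(1-κ))^2 / (2*(β-1)*(σ2+1)*(σ2+β)) := by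
        field_simp
        ring
      rw [e]
      positivity
    nlinarith [sq_nonneg (θ - θs), mul_le_mul_of_nonneg_right hcoef (sq_nonneg (θ - θs))]
  -- put it together
  calc (Real.sqrt (2 * Real.pi * σ2))⁻¹ * (Real.sqrt (2 * Real.pi))⁻¹ * Real.exp E0
        * Real.sqrt (Real.pi / (a/2))
      = (Real.sqrt (2 * Real.pi * σ2))⁻¹
          * (Real.sqrt (σ2 / (σ2 + 1)) * Real.exp E0) := by
        rw [← hc1]; ring
    _ ≤ (Real.sqrt (2 * Real.pi * σ2))⁻¹
          * ((Real.sqrt σ2 / Real.sqrt (σ2 + β)) ^ (1/β)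
            * (Real.exp (-(κ/2) * ((β * (1 - κ) - 1) / (β - 1)) * (θ - θs)^2)
              * Real.exp ((-(β / (2 * (σ2 + β))) * (θ - θs)^2) * (1/β)))) := by
        apply mul_le_mul_of_nonneg_left _ (by positivity)
        rw [← Real.exp_add]
        exact mul_le_mul h1 (by rw [hE0']; exact Real.exp_le_exp.mpr h2)
          (Real.exp_pos _).le (by positivity)
    _ = _ := by rw [hrpow]; ring
end

section
/- Fix β > 1, σ² > 0, κ ∈ (0,1) with κβ/(β-1) < 1, and suppose (κ,σ²) lies in the feasible region R_β, i.e., 1/(σ²(1+β/σ²)^{1/β}) - 1/(σ²+β) < κ((1-κ)β - 1)/(β-1). Then there exists c > 0 such that for all reals θ, θ*: ∫ (p_θ(x)/p_{θ*}(x))^κ · (2πσ²)^{-1/2} e^{-(x-θ)²/(2σ²)} · p_{θ*}(x) dx ≤ e^{-c(θ-θ*)²} · N(θ | θ*, σ²(1+β/σ²)^{1/β}), where p_μ(x) = (2π)^{-1/2}e^{-(x-μ)²/2} and N(θ|m,v) is the normal density with mean m and variance v. -/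
open Real MeasureTheory

theorem continuous_part_gaussian_bound (β σ2 κ : ℝ) (hβ : 1 < β) (hσ : 0 < σ2)
    (hκ0 : 0 < κ) (hκ1 : κ < 1) (hfrac : κ * β / (β - 1) < 1)
    (hfeas : 1 / (σ2 * (1 + β / σ2) ^ (1/β)) - 1 / (σ2 + β)
              < κ * ((1 - κ) * β - 1) / (β - 1)) :
    ∃ c > 0, ∀ θ θs : ℝ,
      ∫ x : ℝ,
        (((Real.sqrt (2 * Real.pi))⁻¹ * Real.exp (-(x - θ)^2 / 2)) /
          ((Real.sqrt (2 * Real.pi))⁻¹ * Real.exp (-(x - θs)^2 / 2))) ^ κ *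
        ((Real.sqrt (2 * Real.pi * σ2))⁻¹ * Real.exp (-(x - θ)^2 / (2 * σ2))) *
        ((Real.sqrt (2 * Real.pi))⁻¹ * Real.exp (-(x - θs)^2 / 2))
      ≤ Real.exp (-c * (θ - θs)^2) *
        ((Real.sqrt (2 * Real.pi * (σ2 * (1 + β / σ2) ^ (1/β))))⁻¹ *
          Real.exp (-(θ - θs)^2 / (2 * (σ2 * (1 + β / σ2) ^ (1/β))))) := by
  have hβ0 : (0:ℝ) < β := by linarith
  have hβ1 : (0:ℝ) < β - 1 := by linarith
  set v : ℝ := σ2 * (1 + β / σ2) ^ (1/β) with hvdef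
  have hv0 : 0 < v := mul_pos hσ (Real.rpow_pos_of_pos (by positivity) _)
  have hvle : v ≤ σ2 + 1 := by
    have hrp : (1 + β / σ2) ^ (1/β) ≤ 1 + (1/β) * (β / σ2) :=
      rpow_one_add_le_one_add_mul_self (by nlinarith [div_pos hβ0 hσ]) (by positivity)
        (by rw [div_le_one hβ0]; linarith)
    calc v ≤ σ2 * (1 + (1/β) * (β / σ2)) := mul_le_mul_of_nonneg_left hrp hσ.le
      _ = σ2 + 1 := by field_simp
  set A : ℝ := (1 - κ) * (1 + κ * σ2) / (2 * (σ2 + 1)) with hAdef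
  -- key algebraic inequality
  have hσ10 : (0:ℝ) < σ2 + 1 := by linarith
  have hσβ : (0:ℝ) < σ2 + β := by linarith
  have key : 1 / (σ2 + β) + κ * ((1 - κ) * β - 1) / (β - 1)
      ≤ (1 - κ) * (1 + κ * σ2) / (σ2 + 1) := by
    rw [div_add_div _ _ (ne_of_gt hσβ) (ne_of_gt hβ1),
      div_le_div_iff₀ (by positivity) hσ10]
    nlinarith [sq_nonneg (1 + σ2 * κ - β * (1 - κ)), sq_nonneg (1 + σ2 * κ - β * (1 - κ))]
  have hA2 : 1 / v < 2 * A := by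
    have : (1 - κ) * (1 + κ * σ2) / (σ2 + 1) = 2 * A := by
      rw [hAdef]; field_simp
    linarith [hfeas]
  have hc0 : 0 < A - 1 / (2 * v) := by
    have : 1 / (2 * v) = (1 / v) / 2 := by ring
    linarith
  refine ⟨A - 1 / (2 * v), hc0, fun θ θs => ?_⟩
  set s : ℝ := (σ2 + 1) / (2 * σ2) with hsdef
  have hs0 : 0 < s := by positivity
  set m : ℝ := (σ2 * (1 - κ) * θs + (κ * σ2 + 1) * θ) / (σ2 + 1) with hmdef
  have hsqrt2π : (0:ℝ) < Real.sqrt (2 * Real.pi) := Real.sqrt_pos.mpr (by positivity)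
  -- pointwise rewrite of the integrand
  have hpt : ∀ x : ℝ,
      (((Real.sqrt (2 * Real.pi))⁻¹ * Real.exp (-(x - θ)^2 / 2)) /
          ((Real.sqrt (2 * Real.pi))⁻¹ * Real.exp (-(x - θs)^2 / 2))) ^ κ *
        ((Real.sqrt (2 * Real.pi * σ2))⁻¹ * Real.exp (-(x - θ)^2 / (2 * σ2))) *
        ((Real.sqrt (2 * Real.pi))⁻¹ * Real.exp (-(x - θs)^2 / 2))
      = ((Real.sqrt (2 * Real.pi * σ2))⁻¹ * (Real.sqrt (2 * Real.pi))⁻¹ *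
          Real.exp (-A * (θ - θs)^2)) * Real.exp (-s * (x - m)^2) := by
    intro x
    rw [mul_div_mul_left _ _ (inv_ne_zero (ne_of_gt hsqrt2π)), ← Real.exp_sub,
      Real.rpow_def_of_pos (Real.exp_pos _), Real.log_exp]
    rw [show ((Real.sqrt (2 * Real.pi * σ2))⁻¹ * (Real.sqrt (2 * Real.pi))⁻¹ *
          Real.exp (-A * (θ - θs)^2)) * Real.exp (-s * (x - m)^2)
        = (Real.sqrt (2 * Real.pi * σ2))⁻¹ * (Real.sqrt (2 * Real.pi))⁻¹ *
          Real.exp (-A * (θ - θs)^2 + -s * (x - m)^2) from by rw [Real.exp_add]; ring]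
    rw [show Real.exp ((-(x - θ)^2 / 2 - -(x - θs)^2 / 2) * κ) *
          ((Real.sqrt (2 * Real.pi * σ2))⁻¹ * Real.exp (-(x - θ)^2 / (2 * σ2))) *
          ((Real.sqrt (2 * Real.pi))⁻¹ * Real.exp (-(x - θs)^2 / 2))
        = (Real.sqrt (2 * Real.pi * σ2))⁻¹ * (Real.sqrt (2 * Real.pi))⁻¹ *
          Real.exp ((-(x - θ)^2 / 2 - -(x - θs)^2 / 2) * κ + -(x - θ)^2 / (2 * σ2)
            + -(x - θs)^2 / 2) from by rw [Real.exp_add, Real.exp_add]; ring]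
    congr 2
    rw [hAdef, hsdef, hmdef]
    field_simp [ne_of_gt hσ, ne_of_gt hσ10]
    ring
  -- compute the integral
  have hint : (∫ x : ℝ,
      (((Real.sqrt (2 * Real.pi))⁻¹ * Real.exp (-(x - θ)^2 / 2)) /
          ((Real.sqrt (2 * Real.pi))⁻¹ * Real.exp (-(x - θs)^2 / 2))) ^ κ *
        ((Real.sqrt (2 * Real.pi * σ2))⁻¹ * Real.exp (-(x - θ)^2 / (2 * σ2))) *
        ((Real.sqrt (2 * Real.pi))⁻¹ * Real.exp (-(x - θs)^2 / 2)))
      = ((Real.sqrt (2 * Real.pi * σ2))⁻¹ * (Real.sqrt (2 * Real.pi))⁻¹ *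
          Real.exp (-A * (θ - θs)^2)) * Real.sqrt (Real.pi / s) := by
    rw [integral_congr_ae (Filter.Eventually.of_forall hpt), integral_const_mul]
    congr 1
    rw [integral_sub_right_eq_self (fun x => Real.exp (-s * x^2)) m]
    exact integral_gaussian s
  rw [hint]
  -- simplify constants
  have hconst : (Real.sqrt (2 * Real.pi * σ2))⁻¹ * (Real.sqrt (2 * Real.pi))⁻¹ *
      Real.sqrt (Real.pi / s) = (Real.sqrt (2 * Real.pi * (σ2 + 1)))⁻¹ := by
    rw [← Real.sqrt_inv, ← Real.sqrt_inv, ← Real.sqrt_mul (by positivity),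
      ← Real.sqrt_mul (by positivity), ← Real.sqrt_inv]
    congr 1
    rw [hsdef]
    field_simp
  have hre : ((Real.sqrt (2 * Real.pi * σ2))⁻¹ * (Real.sqrt (2 * Real.pi))⁻¹ *
          Real.exp (-A * (θ - θs)^2)) * Real.sqrt (Real.pi / s)
      = (Real.sqrt (2 * Real.pi * (σ2 + 1)))⁻¹ * Real.exp (-A * (θ - θs)^2) := by
    rw [← hconst]; ring
  rw [hre]
  -- final comparison
  have hrhs : Real.exp (-(A - 1 / (2 * v)) * (θ - θs)^2) *
      ((Real.sqrt (2 * Real.pi * v))⁻¹ * Real.exp (-(θ - θs)^2 / (2 * v)))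
      = (Real.sqrt (2 * Real.pi * v))⁻¹ * Real.exp (-A * (θ - θs)^2) := by
    rw [show Real.exp (-(A - 1 / (2 * v)) * (θ - θs)^2) *
        ((Real.sqrt (2 * Real.pi * v))⁻¹ * Real.exp (-(θ - θs)^2 / (2 * v)))
        = (Real.sqrt (2 * Real.pi * v))⁻¹ *
          Real.exp (-(A - 1 / (2 * v)) * (θ - θs)^2 + -(θ - θs)^2 / (2 * v)) from by
        rw [Real.exp_add]; ring]
    congr 2
    field_simp [ne_of_gt hv0]
    ring
  rw [hrhs]
  gcongr
end
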